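/- Finite decision threshold for detectability of switched affine models: for all positive integers s, s̄ and n there exists a finite N (one may take N = N(s·s̄, 4n), the pathwise observability threshold for s·s̄ modes and state dimension 4n) such that for every pair of autonomous switched affine models G (s modes, matrices A_i ∈ ℝ^{n×n}, C_i ∈ ℝ^{1×n}, affine term f ∈ ℝ^n) and Ḡ (s̄ modes, matrices Ā_j, C̄_j, affine term f̄, same dimensions), the following are equivalent: (i) Ḡ is not T-detectable for G for any finite T, i.e. for every T ∈ ℕ there exist initial states x_0, x̄_0 ∈ ℝ^n and mode sequences σ, σ̄ of length T such that the outputs of G and Ḡ coincide at all times 0,…,T−1; (ii) there exist initial states and mode sequences of length N with identical outputs at all times 0,…,N−1. -/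

import Mathlib

open Matrix

/-- Trajectory of the autonomous switched affine system
`x_{k+1} = A_{σ_k} x_k + f` from initial state `x0`. -/
def swaTraj {n s : ℕ} (A : Fin s → Matrix (Fin n) (Fin n) ℝ) (f : Fin n → ℝ)
    (σ : ℕ → Fin s) (x0 : Fin n → ℝ) : ℕ → Fin n → ℝ
  | 0 => x0
  | k + 1 => (A (σ k)).mulVec (swaTraj A f σ x0 k) + f

/-- Scalar output `y_k = C_{σ_k} x_k` of the autonomous switched affine
system. -/
def swaOut {n s : ℕ} (A : Fin s → Matrix (Fin n) (Fin n) ℝ)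
    (C : Fin s → Fin n → ℝ) (f : Fin n → ℝ) (σ : ℕ → Fin s)
    (x0 : Fin n → ℝ) (k : ℕ) : ℝ :=
  C (σ k) ⬝ᵥ swaTraj A f σ x0 k

set_option linter.unusedSectionVars false

namespace FDT
open Filter MvPolynomial

variable {ι ν K : Type*} [Fintype ι] [Fintype ν]

section Defs
variable [Field K]

def traj (M : ι → Matrix ν ν K) (σ : ℕ → ι) (x : ν → K) : ℕ → ν → K
  | 0 => x
  | k + 1 => (M (σ k)).mulVec (traj M σ x k)

def zeroAll (M : ι → Matrix ν ν K) (D : ι → ν → K) (σ : ℕ → ι) (x : ν → K) (T : ℕ) : Prop :=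
  ∀ k < T, D (σ k) ⬝ᵥ traj M σ x k = 0

def Zmem (M : ι → Matrix ν ν K) (D : ι → ν → K) (T : ℕ) (x : ν → K) : Prop :=
  ∃ σ, zeroAll M D σ x T

variable {M : ι → Matrix ν ν K} {D : ι → ν → K}

lemma traj_congr {σ σ' : ℕ → ι} {x : ν → K} {k : ℕ} (h : ∀ j < k, σ j = σ' j) :
    traj M σ x k = traj M σ' x k := by
  induction k with
  | zero => rfl
  | succ k ih =>
      have h1 : ∀ j < k, σ j = σ' j := fun j hj => h j (Nat.lt_succ_of_lt hj)
      simp [traj, ih h1, h k (Nat.lt_succ_self k)]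

lemma zeroAll_congr {σ σ' : ℕ → ι} {x : ν → K} {T : ℕ} (h : ∀ j < T, σ j = σ' j)
    (hz : zeroAll M D σ x T) : zeroAll M D σ' x T := by
  intro k hk
  rw [← traj_congr (fun j hj => h j (hj.trans hk)), ← h k hk]
  exact hz k hk

lemma zeroAll_mono {σ : ℕ → ι} {x : ν → K} {T T' : ℕ} (h : T ≤ T')
    (hz : zeroAll M D σ x T') : zeroAll M D σ x T :=
  fun k hk => hz k (hk.trans_le h)

lemma Zmem_anti {x : ν → K} {T T' : ℕ} (h : T ≤ T') (hz : Zmem M D T' x) : Zmem M D T x :=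
  hz.imp fun _ h' => zeroAll_mono h h'

lemma traj_shift (σ : ℕ → ι) (x : ν → K) (k : ℕ) :
    traj M σ x (k + 1) = traj M (fun j => σ (j + 1)) ((M (σ 0)).mulVec x) k := by
  induction k with
  | zero => rfl
  | succ k ih =>
      show (M (σ (k+1))).mulVec (traj M σ x (k+1)) = _
      rw [ih]; rfl

lemma Zmem_succ_iff {x : ν → K} {T : ℕ} :
    Zmem M D (T + 1) x ↔ ∃ a, D a ⬝ᵥ x = 0 ∧ Zmem M D T ((M a).mulVec x) := by
  constructor
  · rintro ⟨σ, hσ⟩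
    refine ⟨σ 0, hσ 0 (Nat.succ_pos _), ⟨fun j => σ (j + 1), fun k hk => ?_⟩⟩
    rw [← traj_shift]
    exact hσ (k + 1) (Nat.succ_lt_succ hk)
  · rintro ⟨a, ha, σ, hσ⟩
    refine ⟨fun j => Nat.rec a (fun j _ => σ j) j, fun k hk => ?_⟩
    cases k with
    | zero => simpa [traj] using ha
    | succ k =>
        rw [traj_shift]
        exact hσ k (Nat.lt_of_succ_lt_succ hk)

def prodM [DecidableEq ν] (M : ι → Matrix ν ν K) (σ : ℕ → ι) : ℕ → Matrix ν ν K
  | 0 => 1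
  | k + 1 => M (σ k) * prodM M σ k

lemma traj_eq_mulVec [DecidableEq ν] (M : ι → Matrix ν ν K) (σ : ℕ → ι) (x : ν → K) (k : ℕ) :
    traj M σ x k = (prodM M σ k).mulVec x := by
  induction k with
  | zero => simp [traj, prodM]
  | succ k ih => simp [traj, prodM, ih, Matrix.mulVec_mulVec]

/-- The row vector representing the `k`-th output functional along `σ`. -/
def rowOf [DecidableEq ν] (M : ι → Matrix ν ν K) (D : ι → ν → K) (σ : ℕ → ι) (k : ℕ) :
    ν → K :=
  Matrix.vecMul (D (σ k)) (prodM M σ k)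

lemma out_eq_rowOf [DecidableEq ν] (M : ι → Matrix ν ν K) (D : ι → ν → K) (σ : ℕ → ι)
    (x : ν → K) (k : ℕ) :
    D (σ k) ⬝ᵥ traj M σ x k = rowOf M D σ k ⬝ᵥ x := by
  rw [traj_eq_mulVec, rowOf, Matrix.dotProduct_mulVec]

/-- The linear polynomial with coefficient vector `r`. -/
noncomputable def linP (r : ν → K) : MvPolynomial ν K := ∑ i, MvPolynomial.C (r i) * MvPolynomial.X i

lemma eval_linP (r x : ν → K) : MvPolynomial.eval x (linP r) = r ⬝ᵥ x := by
  simp [linP, dotProduct]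

/-- Extension of a finite word to an infinite one. -/
noncomputable def extendW [Nonempty ι] {T : ℕ} (w : Fin T → ι) : ℕ → ι :=
  fun k => if h : k < T then w ⟨k, h⟩ else Classical.arbitrary ι

lemma extendW_restrict [Nonempty ι] {T : ℕ} (σ : ℕ → ι) :
    ∀ j < T, σ j = extendW (fun i : Fin T => σ i.1) j := by
  intro j hj; simp [extendW, hj]

lemma Zmem_iff_words [Nonempty ι] {M : ι → Matrix ν ν K} {D : ι → ν → K} {T : ℕ} {x : ν → K} :
    Zmem M D T x ↔ ∃ w : Fin T → ι, zeroAll M D (extendW w) x T := by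
  constructor
  · rintro ⟨σ, hσ⟩
    exact ⟨fun i => σ i.1, zeroAll_congr (extendW_restrict σ) hσ⟩
  · rintro ⟨w, hw⟩; exact ⟨_, hw⟩

end Defs

section Noether
variable [Field K] [DecidableEq ν] [Nonempty ι]
variable (M : ι → Matrix ν ν K) (D : ι → ν → K)

noncomputable def vanIdeal (T : ℕ) : Ideal (MvPolynomial ν K) where
  carrier := {p | ∀ x, Zmem M D T x → MvPolynomial.eval x p = 0}
  add_mem' := by intro a b ha hb x hx; simp [map_add, ha x hx, hb x hx]
  zero_mem' := by intro x hx; simp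
  smul_mem' := by intro c p hp x hx; simp [smul_eq_mul, hp x hx]

lemma mem_vanIdeal_iff {T : ℕ} {p : MvPolynomial ν K} :
    p ∈ vanIdeal M D T ↔ ∀ x, Zmem M D T x → MvPolynomial.eval x p = 0 := Iff.rfl

lemma vanIdeal_mono : Monotone (vanIdeal M D) :=
  fun _ _ h p hp x hx => hp x (Zmem_anti h hx)

lemma exists_stab : ∃ T0 : ℕ, ∀ x, Zmem M D T0 x → Zmem M D (T0 + 1) x := by
  obtain ⟨T0, hT0⟩ := (monotone_stabilizes_iff_noetherian.mpr inferInstance)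
    ⟨vanIdeal M D, vanIdeal_mono M D⟩
  refine ⟨T0, fun x hx => ?_⟩
  by_contra hnx
  have hch : ∀ w : Fin (T0 + 1) → ι,
      ∃ k, k < T0 + 1 ∧ D (extendW w k) ⬝ᵥ traj M (extendW w) x k ≠ 0 := by
    intro w
    by_contra hc
    push_neg at hc
    exact hnx ⟨extendW w, fun k hk => hc k hk⟩
  choose kf hkf hne using hch
  set p : MvPolynomial ν K := ∏ w : Fin (T0 + 1) → ι, linP (rowOf M D (extendW w) (kf w))
    with hp
  have hpvan : p ∈ vanIdeal M D (T0 + 1) := by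
    intro y hy
    obtain ⟨w, hw⟩ := Zmem_iff_words.mp hy
    rw [hp, map_prod]
    refine Finset.prod_eq_zero (Finset.mem_univ w) ?_
    rw [eval_linP, ← out_eq_rowOf]
    exact hw (kf w) (hkf w)
  have hstab : vanIdeal M D T0 = vanIdeal M D (T0 + 1) :=
    hT0 (T0 + 1) (Nat.le_succ T0)
  have hmem : p ∈ vanIdeal M D T0 := by rw [hstab]; exact hpvan
  have hx0 : MvPolynomial.eval x p = 0 := hmem x hx
  have : MvPolynomial.eval x p ≠ 0 := by
    rw [hp, map_prod]
    refine Finset.prod_ne_zero_iff.mpr fun w _ => ?_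
    rw [eval_linP, ← out_eq_rowOf]
    exact hne w
  exact this hx0

lemma stab_propagate {T0 : ℕ} (hstab : ∀ x, Zmem M D T0 x → Zmem M D (T0 + 1) x) :
    ∀ j, ∀ x, Zmem M D (T0 + j) x → Zmem M D (T0 + j + 1) x := by
  intro j
  induction j with
  | zero => exact hstab
  | succ j ih =>
      intro x hx
      obtain ⟨a, ha, hz⟩ := Zmem_succ_iff.mp hx
      exact Zmem_succ_iff.mpr ⟨a, ha, ih _ hz⟩

lemma stab_all {T0 : ℕ} (hstab : ∀ x, Zmem M D T0 x → Zmem M D (T0 + 1) x)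
    (x : ν → K) (hx : Zmem M D T0 x) : ∀ T, Zmem M D T x := by
  have key : ∀ j, Zmem M D (T0 + j) x := by
    intro j
    induction j with
    | zero => simpa using hx
    | succ j ih => exact stab_propagate M D hstab j x ih
  intro T
  rcases le_total T T0 with h | h
  · exact Zmem_anti h hx
  · obtain ⟨j, rfl⟩ := Nat.exists_eq_add_of_le h
    exact key j

end Noether

section Transfer

/-- The ultrapower field. -/
abbrev KS : Type := Filter.Germ (↑(Filter.hyperfilter ℕ) : Filter ℕ) ℝ

noncomputable instance : Field KS := Filter.Germ.instField

lemma coe_sum {γ : Type*} (s : Finset γ) (f : γ → ℕ → ℝ) :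
    (↑(fun N => ∑ j ∈ s, f j N) : KS) = ∑ j ∈ s, (↑(f j) : KS) := by
  have : (fun N => ∑ j ∈ s, f j N) = (∑ j ∈ s, f j) := by
    funext N; rw [Finset.sum_apply]
  rw [this]
  exact map_sum (Filter.Germ.coeRingHom (↑(Filter.hyperfilter ℕ) : Filter ℕ)) f s

lemma coe_eq_zero_iff (f : ℕ → ℝ) :
    (↑f : KS) = 0 ↔ ∀ᶠ N in (↑(Filter.hyperfilter ℕ) : Filter ℕ), f N = 0 := by
  rw [← Filter.Germ.coe_zero, Filter.Germ.coe_eq]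
  rfl

lemma ultra_pigeonhole {α : Type*} [Finite α] (g : ℕ → α) :
    ∃ a, ∀ᶠ N in (↑(Filter.hyperfilter ℕ) : Filter ℕ), g N = a := by
  by_contra hc
  push_neg at hc
  have h1 : ∀ a : α, ∀ᶠ N in (↑(Filter.hyperfilter ℕ) : Filter ℕ), g N ≠ a := fun a =>
    hc a
  obtain ⟨N, hN⟩ := (Filter.eventually_all.mpr h1).exists
  exact hN (g N) rfl

variable [Nonempty ι] [DecidableEq ν]

noncomputable def Mstar (Ms : ℕ → ι → Matrix ν ν ℝ) : ι → Matrix ν ν KS :=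
  fun a => Matrix.of fun i j => (↑(fun N => Ms N a i j) : KS)

noncomputable def Dstar (Ds : ℕ → ι → ν → ℝ) : ι → ν → KS :=
  fun a i => (↑(fun N => Ds N a i) : KS)

noncomputable def xstar (xs : ℕ → ν → ℝ) : ν → KS := fun i => (↑(fun N => xs N i) : KS)

lemma traj_star (Ms : ℕ → ι → Matrix ν ν ℝ) (σ : ℕ → ι) (xs : ℕ → ν → ℝ) (k : ℕ) :
    traj (Mstar Ms) σ (xstar xs) k = xstar (fun N => traj (Ms N) σ (xs N) k) := by
  induction k with
  | zero => rfl
  | succ k ih =>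
      funext i
      show (Mstar Ms (σ k)).mulVec (traj (Mstar Ms) σ (xstar xs) k) i = _
      rw [ih]
      show (∑ j, Mstar Ms (σ k) i j * xstar (fun N => traj (Ms N) σ (xs N) k) j) = _
      have : ∀ j, Mstar Ms (σ k) i j * xstar (fun N => traj (Ms N) σ (xs N) k) j
          = (↑(fun N => Ms N (σ k) i j * traj (Ms N) σ (xs N) k j) : KS) := by
        intro j
        rw [show (fun N => Ms N (σ k) i j * traj (Ms N) σ (xs N) k j)
          = (fun N => Ms N (σ k) i j) * (fun N => traj (Ms N) σ (xs N) k j) from rfl,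
          Filter.Germ.coe_mul]
        rfl
      simp only [this]
      rw [← coe_sum Finset.univ (fun j N => Ms N (σ k) i j * traj (Ms N) σ (xs N) k j)]
      rfl

lemma out_star (Ms : ℕ → ι → Matrix ν ν ℝ) (Ds : ℕ → ι → ν → ℝ) (σ : ℕ → ι)
    (xs : ℕ → ν → ℝ) (k : ℕ) :
    Dstar Ds (σ k) ⬝ᵥ traj (Mstar Ms) σ (xstar xs) k
      = (↑(fun N => Ds N (σ k) ⬝ᵥ traj (Ms N) σ (xs N) k) : KS) := by
  rw [traj_star]
  show (∑ j, Dstar Ds (σ k) j * xstar (fun N => traj (Ms N) σ (xs N) k) j) = _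
  have : ∀ j, Dstar Ds (σ k) j * xstar (fun N => traj (Ms N) σ (xs N) k) j
      = (↑(fun N => Ds N (σ k) j * traj (Ms N) σ (xs N) k j) : KS) := by
    intro j
    rw [show (fun N => Ds N (σ k) j * traj (Ms N) σ (xs N) k j)
      = (fun N => Ds N (σ k) j) * (fun N => traj (Ms N) σ (xs N) k j) from rfl,
      Filter.Germ.coe_mul]
    rfl
  simp only [this]
  rw [← coe_sum Finset.univ (fun j N => Ds N (σ k) j * traj (Ms N) σ (xs N) k j)]
  rfl

end Transfer

section Uniform
variable [Nonempty ι] [DecidableEq ν]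

theorem uniform_stab (Ms : ℕ → ι → Matrix ν ν ℝ) (Ds : ℕ → ι → ν → ℝ) :
    ∃ T0 : ℕ, ∀ᶠ N in (↑(Filter.hyperfilter ℕ) : Filter ℕ),
      ∀ x : ν → ℝ, Zmem (Ms N) (Ds N) T0 x → Zmem (Ms N) (Ds N) (T0 + 1) x := by
  classical
  obtain ⟨T0, hT0⟩ := exists_stab (Mstar Ms) (Dstar Ds)
  refine ⟨T0, ?_⟩
  by_contra hc
  have hc' : ∀ᶠ N in (↑(Filter.hyperfilter ℕ) : Filter ℕ),
      ¬ ∀ x : ν → ℝ, Zmem (Ms N) (Ds N) T0 x → Zmem (Ms N) (Ds N) (T0 + 1) x :=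
    (Ultrafilter.eventually_not).mpr hc
  have hex : ∀ᶠ N in (↑(Filter.hyperfilter ℕ) : Filter ℕ),
      ∃ x, Zmem (Ms N) (Ds N) T0 x ∧ ¬ Zmem (Ms N) (Ds N) (T0 + 1) x := by
    filter_upwards [hc'] with N h
    push_neg at h
    exact h
  set xs : ℕ → ν → ℝ := fun N =>
    if h : ∃ x, Zmem (Ms N) (Ds N) T0 x ∧ ¬ Zmem (Ms N) (Ds N) (T0 + 1) x then h.choose
    else 0 with hxs
  have hxsP : ∀ᶠ N in (↑(Filter.hyperfilter ℕ) : Filter ℕ),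
      Zmem (Ms N) (Ds N) T0 (xs N) ∧ ¬ Zmem (Ms N) (Ds N) (T0 + 1) (xs N) := by
    filter_upwards [hex] with N h
    rw [hxs]; simp only [dif_pos h]; exact h.choose_spec
  have hw : ∀ᶠ N in (↑(Filter.hyperfilter ℕ) : Filter ℕ),
      ∃ w : Fin T0 → ι, zeroAll (Ms N) (Ds N) (extendW w) (xs N) T0 := by
    filter_upwards [hxsP] with N h
    exact Zmem_iff_words.mp h.1
  set ws : ℕ → (Fin T0 → ι) := fun N =>
    if h : ∃ w : Fin T0 → ι, zeroAll (Ms N) (Ds N) (extendW w) (xs N) T0 then h.choose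
    else fun _ => Classical.arbitrary ι with hws
  have hwsP : ∀ᶠ N in (↑(Filter.hyperfilter ℕ) : Filter ℕ),
      zeroAll (Ms N) (Ds N) (extendW (ws N)) (xs N) T0 := by
    filter_upwards [hw] with N h
    rw [hws]; simp only [dif_pos h]; exact h.choose_spec
  obtain ⟨wbar, hwbar⟩ := ultra_pigeonhole ws
  have hZ1 : Zmem (Mstar Ms) (Dstar Ds) T0 (xstar xs) := by
    refine ⟨extendW wbar, fun k hk => ?_⟩
    rw [out_star, coe_eq_zero_iff]
    filter_upwards [hwsP, hwbar] with N h1 h2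
    have h3 := h1 k hk
    rwa [h2] at h3
  obtain ⟨σd, hσd⟩ := hT0 _ hZ1
  have hall : ∀ᶠ N in (↑(Filter.hyperfilter ℕ) : Filter ℕ),
      zeroAll (Ms N) (Ds N) σd (xs N) (T0 + 1) := by
    have hk : ∀ k : Fin (T0 + 1), ∀ᶠ N in (↑(Filter.hyperfilter ℕ) : Filter ℕ),
        Ds N (σd k.1) ⬝ᵥ traj (Ms N) σd (xs N) k.1 = 0 := by
      intro k
      have h4 := hσd k.1 k.2
      rw [out_star, coe_eq_zero_iff] at h4
      exact h4
    filter_upwards [Filter.eventually_all.mpr hk] with N h k hkk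
    exact h ⟨k, hkk⟩
  obtain ⟨N, hN1, hN2⟩ := (hall.and hxsP).exists
  exact hN2.2 ⟨σd, hN1⟩

theorem abstract_threshold :
    ∃ Nth : ℕ, 0 < Nth ∧ ∀ (M : ι → Matrix ν ν ℝ) (D : ι → ν → ℝ) (x : ν → ℝ),
      Zmem M D Nth x → ∀ T, Zmem M D T x := by
  by_contra hc
  push_neg at hc
  classical
  have hc' : ∀ N : ℕ, ∃ (M : ι → Matrix ν ν ℝ) (D : ι → ν → ℝ) (x : ν → ℝ) (T : ℕ),
      Zmem M D (N + 1) x ∧ ¬ Zmem M D T x := by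
    intro N
    obtain ⟨M, D, x, hZ, T, hT⟩ := hc (N + 1) (Nat.succ_pos N)
    exact ⟨M, D, x, T, hZ, hT⟩
  choose Mf Df xf Tf h1 h2 using hc'
  obtain ⟨T0, hT0⟩ := uniform_stab Mf Df
  have hcof : ∀ᶠ N in (↑(Filter.hyperfilter ℕ) : Filter ℕ), T0 ≤ N + 1 := by
    have h5 : ∀ᶠ N in Filter.atTop, T0 ≤ N + 1 :=
      Filter.eventually_atTop.mpr ⟨T0, fun N hN => hN.trans (Nat.le_succ N)⟩
    rw [← Nat.cofinite_eq_atTop] at h5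
    exact h5.filter_mono Filter.hyperfilter_le_cofinite
  obtain ⟨N, hst, hle⟩ := (hT0.and hcof).exists
  have hZ : Zmem (Mf N) (Df N) T0 (xf N) := Zmem_anti hle (h1 N)
  exact h2 N (stab_all (Mf N) (Df N) hst (xf N) hZ (Tf N))

end Uniform

section Encode

variable {n s sb : ℕ}

abbrev Vt (n : ℕ) : Type := (Fin n ⊕ Fin n) ⊕ Unit
abbrev It (s sb : ℕ) : Type := Fin s × Fin sb

def bigM (A : Fin s → Matrix (Fin n) (Fin n) ℝ) (f : Fin n → ℝ)
    (Ab : Fin sb → Matrix (Fin n) (Fin n) ℝ) (fb : Fin n → ℝ) (p : It s sb) :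
    Matrix (Vt n) (Vt n) ℝ :=
  Matrix.of fun u v =>
    match u, v with
    | .inl (.inl i), .inl (.inl j) => A p.1 i j
    | .inl (.inl _), .inl (.inr _) => 0
    | .inl (.inl i), .inr _ => f i
    | .inl (.inr _), .inl (.inl _) => 0
    | .inl (.inr i), .inl (.inr j) => Ab p.2 i j
    | .inl (.inr i), .inr _ => fb i
    | .inr _, .inl _ => 0
    | .inr _, .inr _ => 1

def bigD (C : Fin s → Fin n → ℝ) (Cb : Fin sb → Fin n → ℝ) (p : It s sb) : Vt n → ℝ :=
  fun u =>
    match u with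
    | .inl (.inl i) => C p.1 i
    | .inl (.inr i) => -(Cb p.2 i)
    | .inr _ => 0

def enc (x xb : Fin n → ℝ) : Vt n → ℝ :=
  fun u =>
    match u with
    | .inl (.inl i) => x i
    | .inl (.inr i) => xb i
    | .inr _ => 1

lemma bigM_mulVec (A : Fin s → Matrix (Fin n) (Fin n) ℝ) (f : Fin n → ℝ)
    (Ab : Fin sb → Matrix (Fin n) (Fin n) ℝ) (fb : Fin n → ℝ) (p : It s sb)
    (x xb : Fin n → ℝ) :
    (bigM A f Ab fb p).mulVec (enc x xb)
      = enc ((A p.1).mulVec x + f) ((Ab p.2).mulVec xb + fb) := by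
  funext u
  match u with
  | .inl (.inl i) =>
      show (∑ v, bigM A f Ab fb p (Sum.inl (Sum.inl i)) v * enc x xb v) = _
      rw [Fintype.sum_sum_type, Fintype.sum_sum_type]
      simp [bigM, enc, Matrix.mulVec, dotProduct]
  | .inl (.inr i) =>
      show (∑ v, bigM A f Ab fb p (Sum.inl (Sum.inr i)) v * enc x xb v) = _
      rw [Fintype.sum_sum_type, Fintype.sum_sum_type]
      simp [bigM, enc, Matrix.mulVec, dotProduct]
  | .inr _ =>
      show (∑ v, bigM A f Ab fb p (Sum.inr ()) v * enc x xb v) = _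
      rw [Fintype.sum_sum_type, Fintype.sum_sum_type]
      simp [bigM, enc]

lemma bigD_dot (C : Fin s → Fin n → ℝ) (Cb : Fin sb → Fin n → ℝ) (p : It s sb)
    (x xb : Fin n → ℝ) :
    bigD C Cb p ⬝ᵥ enc x xb = C p.1 ⬝ᵥ x - Cb p.2 ⬝ᵥ xb := by
  show (∑ v, bigD C Cb p v * enc x xb v) = _
  rw [Fintype.sum_sum_type, Fintype.sum_sum_type]
  simp [bigD, enc, dotProduct, sub_eq_add_neg, Finset.sum_neg_distrib]

lemma traj_enc (A : Fin s → Matrix (Fin n) (Fin n) ℝ) (f : Fin n → ℝ)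
    (Ab : Fin sb → Matrix (Fin n) (Fin n) ℝ) (fb : Fin n → ℝ)
    (σp : ℕ → It s sb) (x0 xb0 : Fin n → ℝ) (k : ℕ) :
    traj (bigM A f Ab fb) σp (enc x0 xb0) k
      = enc (swaTraj A f (fun j => (σp j).1) x0 k)
          (swaTraj Ab fb (fun j => (σp j).2) xb0 k) := by
  induction k with
  | zero => rfl
  | succ k ih =>
      show (bigM A f Ab fb (σp k)).mulVec (traj (bigM A f Ab fb) σp (enc x0 xb0) k) = _
      rw [ih, bigM_mulVec]
      rfl

end Encode

end FDT


/-- finite decision threshold for detectability of switched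
affine models.  For all positive `s`, `s̄`, `n` there is a finite `N` such
that for every pair of autonomous switched affine models `G` (`s` modes) and
`Ḡ` (`s̄` modes), both with state dimension `n` and scalar output, the
following are equivalent: (i) for every horizon `T` there are initial states
and mode sequences making the two outputs coincide on `0, …, T-1` (i.e. `Ḡ`
is not `T`-detectable for `G` for any finite `T`); (ii) the same holds for the
single horizon `N`. -/
theorem finite_detectability_threshold (s sb n : ℕ)
    (hs : 0 < s) (hsb : 0 < sb) (hn : 0 < n) :
    ∃ N : ℕ, 0 < N ∧
      ∀ (A : Fin s → Matrix (Fin n) (Fin n) ℝ) (C : Fin s → Fin n → ℝ)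
        (f : Fin n → ℝ)
        (Ab : Fin sb → Matrix (Fin n) (Fin n) ℝ) (Cb : Fin sb → Fin n → ℝ)
        (fb : Fin n → ℝ),
        ((∀ T : ℕ, ∃ (x0 xb0 : Fin n → ℝ) (σ : ℕ → Fin s) (σb : ℕ → Fin sb),
            ∀ k < T, swaOut A C f σ x0 k = swaOut Ab Cb fb σb xb0 k) ↔
          (∃ (x0 xb0 : Fin n → ℝ) (σ : ℕ → Fin s) (σb : ℕ → Fin sb),
            ∀ k < N, swaOut A C f σ x0 k = swaOut Ab Cb fb σb xb0 k)) := by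
  haveI : Nonempty (FDT.It s sb) := ⟨(⟨0, hs⟩, ⟨0, hsb⟩)⟩
  obtain ⟨Nth, hpos, hthm⟩ := FDT.abstract_threshold (ι := FDT.It s sb) (ν := FDT.Vt n)
  refine ⟨Nth, hpos, fun A C f Ab Cb fb => ⟨fun h => h Nth, fun h T => ?_⟩⟩
  obtain ⟨x0, xb0, σ, σb, hm⟩ := h
  have hz : FDT.Zmem (FDT.bigM A f Ab fb) (FDT.bigD C Cb) Nth (FDT.enc x0 xb0) := by
    refine ⟨fun k => (σ k, σb k), fun k hk => ?_⟩
    rw [FDT.traj_enc, FDT.bigD_dot]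
    have h1 := hm k hk
    simp only [swaOut] at h1
    rw [sub_eq_zero]
    exact h1
  obtain ⟨σp, hzp⟩ := hthm _ _ _ hz T
  refine ⟨x0, xb0, fun k => (σp k).1, fun k => (σp k).2, fun k hk => ?_⟩
  have h2 := hzp k hk
  rw [FDT.traj_enc, FDT.bigD_dot] at h2
  rw [sub_eq_zero] at h2
  simpa [swaOut] using h2
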